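/- The second moment of R_{η}^{(α,β)} is R_{η}^{(α,β)}(t²; x) = x² + [x((2α+5)β+1)η + β(α²+4α+3) + α + 1]/(η²β). -/

import Mathlib

open Real MeasureTheory Filter Set

/-- Generalized Laguerre polynomial `L_κ^{(α)}(x)`. -/
noncomputable def lag (κ : ℕ) (α x : ℝ) : ℝ :=
  ∑ ι ∈ Finset.range (κ + 1),
    (-1 : ℝ) ^ ι / (Nat.factorial ι) *
      ((∏ s ∈ Finset.range (κ - ι), (α + ι + 1 + s)) / (Nat.factorial (κ - ι))) * x ^ ι
/-- Gamma-type kernel `I_{κ,η}^β(z)`. -/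
noncomputable def ker (η β : ℝ) (κ : ℕ) (z : ℝ) : ℝ :=
  η * β * Real.exp (-(η * β * z)) * (η * β * z) ^ ((κ : ℝ) * β - 1) / Real.Gamma ((κ : ℝ) * β)
/-- The operators `R_η^{(α,β)}(Φ; x)`, with the `κ = 0` term interpreted as `Φ(0)·(coefficient)`. -/
noncomputable def Rop (η β α : ℝ) (Φ : ℝ → ℝ) (x : ℝ) : ℝ :=
  Real.exp (-(η * x) / 2) * (2 : ℝ) ^ (-α - 1) *
    ∑' κ : ℕ, (2 : ℝ) ^ (-(κ : ℝ)) * lag κ α (-(η * x) / 2) *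
      (if κ = 0 then Φ 0 else ∫ z in Set.Ioi (0 : ℝ), ker η β κ z * Φ z)

noncomputable def asc (c : ℝ) (m : ℕ) : ℝ :=
  (∏ s ∈ Finset.range m, (c + s)) / m.factorial

lemma asc_pos {c : ℝ} (hc : 0 < c) (m : ℕ) : 0 < asc c m := by
  unfold asc
  apply div_pos
  · exact Finset.prod_pos fun s _ => by positivity
  · positivity

lemma Gamma_asc {c : ℝ} (hc : 0 < c) (m : ℕ) :
    Real.Gamma (c + m) = Real.Gamma c * ∏ s ∈ Finset.range m, (c + s) := by
  induction m with
  | zero => simp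
  | succ n ih =>
    rw [Finset.prod_range_succ, ← mul_assoc, ← ih]
    have h1 : c + (n + 1 : ℕ) = (c + n) + 1 := by push_cast; ring
    rw [h1, Real.Gamma_add_one (by positivity)]
    ring

lemma summable_asc {c : ℝ} (hc : 0 < c) :
    Summable (fun m : ℕ => asc c m * (1/2 : ℝ) ^ m) := by
  apply summable_of_ratio_norm_eventually_le (r := 3/4) (by norm_num)
  filter_upwards [Filter.eventually_ge_atTop (Nat.ceil (2*c))] with m hm
  have hm' : 2 * c ≤ m := le_trans (Nat.le_ceil _) (by exact_mod_cast hm)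
  have h1 : (0:ℝ) < asc c m * (1/2)^m := mul_pos (asc_pos hc m) (by positivity)
  have h2 : (0:ℝ) < asc c (m+1) * (1/2)^(m+1) := mul_pos (asc_pos hc (m+1)) (by positivity)
  rw [Real.norm_of_nonneg h2.le, Real.norm_of_nonneg h1.le]
  have key : asc c (m+1) = asc c m * ((c + m) / (m+1)) := by
    unfold asc
    rw [Finset.prod_range_succ, Nat.factorial_succ]
    push_cast
    field_simp
  rw [key]
  have hmpos : (0:ℝ) < (m:ℝ) + 1 := by positivity
  have hfrac : (c + m) / (m + 1) ≤ 3/2 := by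
    rw [div_le_iff₀ hmpos]; nlinarith
  calc asc c m * ((c+m)/(m+1)) * (1/2)^(m+1)
      = (asc c m * (1/2)^m) * (((c+m)/(m+1)) * (1/2)) := by ring
    _ ≤ (asc c m * (1/2)^m) * (3/4) := by
        apply mul_le_mul_of_nonneg_left _ h1.le
        nlinarith
    _ = 3/4 * (asc c m * (1/2)^m) := by ring
lemma integrableOn_rpow_exp {p r : ℝ} (hp : 0 < p) (hr : 0 < r) :
    IntegrableOn (fun z : ℝ => z ^ (p - 1) * Real.exp (-(r * z))) (Ioi 0) := by
  have h0 : IntegrableOn (fun x : ℝ => Real.exp (-x) * x ^ (p - 1)) (Ioi 0) :=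
    Real.GammaIntegral_convergent hp
  have h1 : IntegrableOn (fun z : ℝ => Real.exp (-(r * z)) * (r * z) ^ (p - 1)) (Ioi 0) := by
    have := (integrableOn_Ioi_comp_mul_left_iff
      (fun x : ℝ => Real.exp (-x) * x ^ (p - 1)) 0 hr).mpr (by simpa using h0)
    simpa using this
  have h2 := h1.const_mul ((r : ℝ) ^ (p - 1))⁻¹
  refine MeasureTheory.IntegrableOn.congr_fun h2 (fun z hz => ?_) measurableSet_Ioi
  have hz : (0:ℝ) < z := hz
  rw [Real.mul_rpow hr.le hz.le]
  have hrp : (0:ℝ) < r ^ (p - 1) := Real.rpow_pos_of_pos hr _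
  field_simp

lemma hasSum_asc {c : ℝ} (hc : 0 < c) :
    HasSum (fun m : ℕ => asc c m * (1/2 : ℝ) ^ m) ((2:ℝ) ^ c) := by
  have hG : 0 < Real.Gamma c := Real.Gamma_pos_of_pos hc
  have h2c : (0:ℝ) < (2:ℝ) ^ c := Real.rpow_pos_of_pos two_pos _
  set f : ℕ → ℝ → ℝ := fun m z =>
    (2:ℝ) ^ c / (Real.Gamma c * m.factorial) * (z ^ (c + m - 1) * Real.exp (-(2 * z)))
    with hf_def
  -- value of each integral
  have hint : ∀ m : ℕ, IntegrableOn (fun z => z ^ (c + (m:ℝ) - 1) * Real.exp (-(2 * z))) (Ioi 0) := by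
    intro m
    exact integrableOn_rpow_exp (by positivity) two_pos
  have hfint : ∀ m : ℕ, IntegrableOn (f m) (Ioi 0) := fun m => (hint m).const_mul _
  have hval : ∀ m : ℕ, ∫ z in Ioi 0, f m z = asc c m * (1/2:ℝ) ^ m := by
    intro m
    have := integral_rpow_mul_exp_neg_mul_Ioi (a := c + m) (r := 2) (by positivity) two_pos
    rw [hf_def]
    simp only []
    rw [MeasureTheory.integral_const_mul, this, Gamma_asc hc m]
    have e1 : ((1:ℝ)/2) ^ (c + (m:ℝ)) = (1/2:ℝ) ^ c * (1/2:ℝ) ^ m := by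
      rw [Real.rpow_add (by norm_num), Real.rpow_natCast]
    have e2 : ((1:ℝ)/2) ^ c = ((2:ℝ) ^ c)⁻¹ := by
      rw [one_div]; exact Real.inv_rpow (by norm_num) c
    rw [e1, e2]
    unfold asc
    have hfa : ((m.factorial : ℝ)) ≠ 0 := by positivity
    field_simp
  -- a.e. nonneg
  have hnn : ∀ m : ℕ, 0 ≤ᵐ[volume.restrict (Ioi (0:ℝ))] f m := by
    intro m
    filter_upwards [ae_restrict_mem measurableSet_Ioi] with z hz
    have hz : (0:ℝ) < z := hz
    have : (0:ℝ) ≤ z ^ (c + (m:ℝ) - 1) := Real.rpow_nonneg hz.le _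
    positivity
  -- measurability
  have hmeas : ∀ m : ℕ, AEStronglyMeasurable (f m) (volume.restrict (Ioi (0:ℝ))) := by
    intro m
    refine ContinuousOn.aestronglyMeasurable ?_ measurableSet_Ioi
    refine ContinuousOn.mul continuousOn_const (ContinuousOn.mul ?_ (Continuous.continuousOn (by continuity)))
    intro z hz
    exact (Real.continuousAt_rpow_const z _ (Or.inl (ne_of_gt hz))).continuousWithinAt
  -- lintegral bound
  have hlin : ∑' m : ℕ, ∫⁻ z in Ioi (0:ℝ), ‖f m z‖₊ ≠ ⊤ := by
    have heq : ∀ m : ℕ, (∫⁻ z in Ioi (0:ℝ), ‖f m z‖₊) = ENNReal.ofReal (asc c m * (1/2:ℝ)^m) := by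
      intro m
      rw [← hval m, ofReal_integral_eq_lintegral_ofReal (hfint m) (hnn m)]
      apply lintegral_congr_ae
      filter_upwards [hnn m] with z hz
      exact Real.enorm_eq_ofReal hz
    rw [tsum_congr heq, ← ENNReal.ofReal_tsum_of_nonneg
      (fun m => mul_nonneg (asc_pos hc m).le (by positivity)) (summable_asc hc)]
    exact ENNReal.ofReal_ne_top
  have hswap := MeasureTheory.integral_tsum hmeas hlin
  have hpt : ∀ z ∈ Ioi (0:ℝ), (∑' m, f m z)
      = (2:ℝ)^c / Real.Gamma c * (Real.exp (-z) * z ^ (c-1)) := by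
    intro z hz
    have hz : (0:ℝ) < z := hz
    have hfz : ∀ m : ℕ, f m z
        = ((2:ℝ)^c / Real.Gamma c * (z ^ (c-1) * Real.exp (-(2*z)))) * (z ^ m / m.factorial) := by
      intro m
      have e1 : z ^ (c + (m:ℝ) - 1) = z ^ (c - 1) * z ^ m := by
        rw [show c + (m:ℝ) - 1 = (c - 1) + m by ring, Real.rpow_add hz, Real.rpow_natCast]
      rw [hf_def]
      simp only []
      rw [e1]
      have hfa : ((m.factorial : ℝ)) ≠ 0 := by positivity
      field_simp
    rw [tsum_congr hfz, tsum_mul_left,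
      (NormedSpace.expSeries_div_hasSum_exp z).tsum_eq, ← Real.exp_eq_exp_ℝ]
    rw [show Real.exp (-z) = Real.exp (-(2*z)) * Real.exp z by
      rw [← Real.exp_add]; ring_nf]
    ring
  refine (summable_asc hc).hasSum_iff.mpr ?_
  have h1 : ∑' m : ℕ, asc c m * (1/2:ℝ)^m = ∑' m : ℕ, ∫ z in Ioi 0, f m z :=
    tsum_congr (fun m => (hval m).symm)
  rw [h1, ← hswap, setIntegral_congr_fun measurableSet_Ioi hpt,
    MeasureTheory.integral_const_mul, ← Real.Gamma_eq_integral hc]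
  field_simp
lemma asc_succ_mul (c : ℝ) (m : ℕ) :
    ((m:ℝ) + 1) * asc c (m + 1) = c * asc (c + 1) m := by
  unfold asc
  rw [Finset.prod_range_succ', Nat.factorial_succ]
  have : ∀ s ∈ Finset.range m, (c + ((s:ℕ) + 1 : ℕ)) = ((c+1) + s) := by
    intro s _; push_cast; ring
  rw [Finset.prod_congr rfl this]
  have h1 : ((m+1).factorial : ℝ) ≠ 0 := by positivity
  push_cast
  field_simp
  ring

lemma hasSum_asc_one {c : ℝ} (hc : 0 < c) :
    HasSum (fun m : ℕ => (m:ℝ) * (asc c m * (1/2 : ℝ) ^ m)) (c * (2:ℝ) ^ c) := by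
  have h := (hasSum_asc (by linarith : (0:ℝ) < c + 1)).mul_left (c / 2)
  have he : ∀ m : ℕ, c / 2 * (asc (c+1) m * (1/2:ℝ)^m)
      = (fun n : ℕ => (n:ℝ) * (asc c n * (1/2:ℝ)^n)) (m + 1) := by
    intro m
    push_cast
    linear_combination (-((1/2:ℝ)^m * (1/2))) * asc_succ_mul c m
  rw [funext he] at h
  have h2 := (hasSum_nat_add_iff (f := fun n : ℕ => (n:ℝ) * (asc c n * (1/2:ℝ)^n)) 1).mp h
  simp only [Finset.sum_range_one, Nat.cast_zero, zero_mul, add_zero] at h2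
  convert h2 using 1
  · rfl
  rw [Real.rpow_add_one two_ne_zero]; ring

lemma hasSum_asc_two {c : ℝ} (hc : 0 < c) :
    HasSum (fun m : ℕ => (m:ℝ) * ((m:ℝ) - 1) * (asc c m * (1/2 : ℝ) ^ m))
      (c * (c + 1) * (2:ℝ) ^ c) := by
  have h := (hasSum_asc (by linarith : (0:ℝ) < c + 2)).mul_left (c * (c+1) / 4)
  have he : ∀ m : ℕ, c * (c+1) / 4 * (asc (c+2) m * (1/2:ℝ)^m)
      = (fun n : ℕ => (n:ℝ) * ((n:ℝ) - 1) * (asc c n * (1/2:ℝ)^n)) (m + 2) := by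
    intro m
    have k1 : ((m:ℝ) + 2) * asc c (m + 2) = c * asc (c + 1) (m + 1) := by
      have := asc_succ_mul c (m+1)
      push_cast at this
      linarith
    have k2 : ((m:ℝ) + 1) * asc (c+1) (m + 1) = (c+1) * asc (c+2) m := by
      have := asc_succ_mul (c+1) m
      rw [show c + 1 + 1 = c + 2 by ring] at this
      linarith
    push_cast
    linear_combination (-((1/2:ℝ)^m / 4)) * (((m:ℝ)+1) * k1 + c * k2)
  rw [funext he] at h
  have h2 := (hasSum_nat_add_iff (f := fun n : ℕ => (n:ℝ) * ((n:ℝ) - 1) * (asc c n * (1/2:ℝ)^n)) 2).mp h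
  simp only [Finset.sum_range_succ, Finset.sum_range_zero, Nat.cast_zero, Nat.cast_one] at h2
  norm_num at h2
  convert h2 using 1
  · rfl
  rw [show c + 2 = (c + 1) + 1 by ring, Real.rpow_add_one two_ne_zero,
    Real.rpow_add_one two_ne_zero]
  ring

lemma hasSum_asc_quad {c : ℝ} (hc : 0 < c) (p q r : ℝ) :
    HasSum (fun m : ℕ => (p * ((m:ℝ) * ((m:ℝ) - 1)) + q * m + r) * (asc c m * (1/2 : ℝ) ^ m))
      ((p * (c * (c+1)) + q * c + r) * (2:ℝ) ^ c) := by
  have h := (((hasSum_asc_two hc).mul_left p).add ((hasSum_asc_one hc).mul_left q)).add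
    ((hasSum_asc hc).mul_left r)
  have e1 : (fun m : ℕ => (p * ((m:ℝ) * ((m:ℝ) - 1)) + q * m + r) * (asc c m * (1/2 : ℝ) ^ m))
      = fun m : ℕ => p * ((m:ℝ) * ((m:ℝ) - 1) * (asc c m * (1/2:ℝ)^m))
        + q * ((m:ℝ) * (asc c m * (1/2:ℝ)^m)) + r * (asc c m * (1/2:ℝ)^m) :=
    funext fun m => by ring
  have e2 : (p * (c * (c+1)) + q * c + r) * (2:ℝ) ^ c
      = p * (c * (c+1) * (2:ℝ)^c) + q * (c * (2:ℝ)^c) + r * (2:ℝ)^c := by ring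
  rw [e1, e2]; exact h

lemma hasSum_exp_pow (y : ℝ) : HasSum (fun ι : ℕ => y ^ ι / ι.factorial) (Real.exp y) := by
  rw [Real.exp_eq_exp_ℝ]
  exact NormedSpace.expSeries_div_hasSum_exp y

lemma hasSum_exp_one (y : ℝ) :
    HasSum (fun ι : ℕ => (ι:ℝ) * (y ^ ι / ι.factorial)) (y * Real.exp y) := by
  have h := (hasSum_exp_pow y).mul_left y
  have he : ∀ ι : ℕ, y * (y ^ ι / ι.factorial)
      = (fun n : ℕ => (n:ℝ) * (y ^ n / n.factorial)) (ι + 1) := by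
    intro ι
    have hf : (((ι+1).factorial:ℝ)) = ((ι:ℝ)+1) * ι.factorial := by
      rw [Nat.factorial_succ]; push_cast; ring
    have h1 : ((ι:ℝ)+1) ≠ 0 := by positivity
    have h2 : ((ι.factorial:ℝ)) ≠ 0 := by positivity
    push_cast [hf]
    field_simp
    ring
  rw [funext he] at h
  have h2 := (hasSum_nat_add_iff (f := fun n : ℕ => (n:ℝ) * (y ^ n / n.factorial)) 1).mp h
  simpa using h2

lemma hasSum_exp_two (y : ℝ) :
    HasSum (fun ι : ℕ => (ι:ℝ) * ((ι:ℝ) - 1) * (y ^ ι / ι.factorial)) (y^2 * Real.exp y) := by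
  have h := (hasSum_exp_pow y).mul_left (y^2)
  have he : ∀ ι : ℕ, y^2 * (y ^ ι / ι.factorial)
      = (fun n : ℕ => (n:ℝ) * ((n:ℝ) - 1) * (y ^ n / n.factorial)) (ι + 2) := by
    intro ι
    have hf : (((ι+2).factorial:ℝ)) = ((ι:ℝ)+2) * (((ι:ℝ)+1) * ι.factorial) := by
      rw [Nat.factorial_succ, Nat.factorial_succ]; push_cast; ring
    have h2 : ((ι.factorial:ℝ)) ≠ 0 := by positivity
    push_cast [hf]
    field_simp
    ring
  rw [funext he] at h
  have h2 := (hasSum_nat_add_iff (f := fun n : ℕ => (n:ℝ) * ((n:ℝ) - 1) * (y ^ n / n.factorial)) 2).mp h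
  simp only [Finset.sum_range_succ, Finset.sum_range_zero, Nat.cast_zero, Nat.cast_one] at h2
  norm_num at h2
  exact h2

lemma hasSum_exp_quad (y p q r : ℝ) :
    HasSum (fun ι : ℕ => (p * ((ι:ℝ) * ((ι:ℝ) - 1)) + q * ι + r) * (y ^ ι / ι.factorial))
      ((p * y^2 + q * y + r) * Real.exp y) := by
  have h := (((hasSum_exp_two y).mul_left p).add ((hasSum_exp_one y).mul_left q)).add
    ((hasSum_exp_pow y).mul_left r)
  have e1 : (fun ι : ℕ => (p * ((ι:ℝ) * ((ι:ℝ) - 1)) + q * ι + r) * (y ^ ι / ι.factorial))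
      = fun ι : ℕ => p * ((ι:ℝ) * ((ι:ℝ) - 1) * (y^ι / ι.factorial))
        + q * ((ι:ℝ) * (y^ι / ι.factorial)) + r * (y^ι / ι.factorial) :=
    funext fun ι => by ring
  have e2 : (p * y^2 + q * y + r) * Real.exp y
      = p * (y^2 * Real.exp y) + q * (y * Real.exp y) + r * Real.exp y := by ring
  rw [e1, e2]; exact h
lemma ker_integral {η β : ℝ} (hη : 0 < η) (hβ : 0 < β) (κ : ℕ) (hκ : κ ≠ 0) :
    ∫ z in Ioi (0:ℝ), ker η β κ z * z ^ 2
      = ((κ:ℝ) * β) * ((κ:ℝ) * β + 1) / (η * β) ^ 2 := by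
  set b := η * β with hb_def
  set p := (κ:ℝ) * β with hp_def
  have hb : 0 < b := mul_pos hη hβ
  have hp : 0 < p := mul_pos (by exact_mod_cast Nat.pos_of_ne_zero hκ) hβ
  have hG : 0 < Real.Gamma p := Real.Gamma_pos_of_pos hp
  have hcongr : ∀ z ∈ Ioi (0:ℝ), ker η β κ z * z ^ 2
      = (b * b ^ (p - 1) / Real.Gamma p) * (z ^ (p + 2 - 1) * Real.exp (-(b * z))) := by
    intro z hz
    have hz : (0:ℝ) < z := hz
    unfold _root_.ker
    rw [← hb_def, ← hp_def]
    rw [Real.mul_rpow hb.le hz.le]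
    have e1 : z ^ (p - 1) * z ^ 2 = z ^ (p + 2 - 1) := by
      rw [← Real.rpow_natCast z 2, ← Real.rpow_add hz]
      congr 1
      push_cast; ring
    field_simp
    rw [← e1, ← Real.rpow_natCast z 2]
    ring
  rw [setIntegral_congr_fun measurableSet_Ioi hcongr, MeasureTheory.integral_const_mul,
    integral_rpow_mul_exp_neg_mul_Ioi (by linarith) hb]
  have hG2 : Real.Gamma (p + 2) = (p + 1) * (p * Real.Gamma p) := by
    rw [show p + 2 = (p + 1) + 1 by ring, Real.Gamma_add_one (by positivity),
      Real.Gamma_add_one hp.ne']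
  rw [hG2]
  have e2 : ((1:ℝ)/b) ^ (p + 2) = (b ^ (p + 2) : ℝ)⁻¹ := by
    rw [one_div]; exact Real.inv_rpow hb.le _
  have e3 : b * b ^ (p - 1) = b ^ p := by
    rw [mul_comm, ← Real.rpow_add_one hb.ne' (p - 1)]; norm_num
  have e5 : b ^ p * (b:ℝ) ^ 2 = b ^ (p + 2) := by
    rw [← Real.rpow_natCast b 2, ← Real.rpow_add hb]
    norm_num
  rw [e2, e3]
  have hbp2 : (0:ℝ) < b ^ (p + 2) := Real.rpow_pos_of_pos hb _
  field_simp
  linear_combination ((p + 1) * p * Real.Gamma p) * e5 + (1 - β*κ*Real.Gamma p - β^2*κ^2*Real.Gamma p) * e5 - (1 - β*κ*Real.Gamma p - β^2*κ^2*Real.Gamma p) * b^p * (b + η*β) * hb_def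
set_option maxHeartbeats 2000000 in
/-- The second moment of `R_η^{(α,β)}`. -/
theorem stmt8 (α β η x : ℝ) (hα : -1 < α) (hβ : 0 < β) (hη : 0 < η) (hx : 0 ≤ x) :
    Rop η β α (fun t => t ^ 2) x =
      x ^ 2 + (x * ((2 * α + 5) * β + 1) * η + β * (α ^ 2 + 4 * α + 3) + α + 1) / (η ^ 2 * β) := by
  have hu : 0 < α + 1 := by linarith
  set y : ℝ := η * x / 2 with hy_def
  have hy : 0 ≤ y := by positivity
  set A : ℝ := 1 / η ^ 2 with hA_def
  set B : ℝ := 1 / (η ^ 2 * β) with hB_def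
  have hA : 0 < A := by rw [hA_def]; positivity
  have hB : 0 < B := by rw [hB_def]; positivity
  set w : ℕ → ℝ := fun κ => ((κ:ℝ) * β) * ((κ:ℝ) * β + 1) / (η * β) ^ 2 with hw_def
  have hw : ∀ κ : ℕ, w κ = A * (κ:ℝ)^2 + B * κ := by
    intro κ; rw [hw_def, hA_def, hB_def]; field_simp
  have hwnn : ∀ κ : ℕ, 0 ≤ w κ := by intro κ; rw [hw κ]; positivity
  set g : ℕ × ℕ → ℝ := fun p =>
    (y ^ p.1 / p.1.factorial) * (asc (α + p.1 + 1) p.2 * (1/2:ℝ) ^ p.2) * (1/2:ℝ) ^ p.1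
      * w (p.1 + p.2) with hg_def
  have hcpos : ∀ ι : ℕ, (0:ℝ) < α + ι + 1 := by
    intro ι
    have : (0:ℝ) ≤ ι := Nat.cast_nonneg ι
    linarith
  -- row sums
  have hrow : ∀ ι : ℕ, HasSum (fun m => g (ι, m))
      ((2:ℝ)^(α+1) * ((4*A * ((ι:ℝ)*((ι:ℝ)-1)) + (A*(4*(α+1)+6)+2*B) * (ι:ℝ)
        + (A*((α+1)^2+2*(α+1))+B*(α+1))) * (y^ι / ι.factorial))) := by
    intro ι
    have h := (hasSum_asc_quad (hcpos ι) A (2*A*(ι:ℝ)+A+B) (A*(ι:ℝ)^2+B*(ι:ℝ))).mul_left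
      ((y ^ ι / ι.factorial) * (1/2:ℝ)^ι)
    have hfun : (fun m : ℕ => (y ^ ι / ι.factorial) * (1/2:ℝ)^ι *
        ((A * ((m:ℝ)*((m:ℝ)-1)) + (2*A*(ι:ℝ)+A+B)*(m:ℝ) + (A*(ι:ℝ)^2+B*(ι:ℝ)))
          * (asc (α+(ι:ℝ)+1) m * (1/2:ℝ)^m)))
        = fun m : ℕ => g (ι, m) := by
      funext m
      rw [hg_def]
      simp only []
      rw [hw (ι+m)]
      push_cast
      ring
    rw [hfun] at h
    convert h using 1
    · rfl
    have hp2 : (2:ℝ)^(α+(ι:ℝ)+1) = (2:ℝ)^(α+1) * (2:ℝ)^(ι:ℕ) := by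
      rw [show α+(ι:ℝ)+1 = (α+1)+(ι:ℝ) by ring, Real.rpow_add two_pos, Real.rpow_natCast]
    rw [hp2, one_div, inv_pow]
    have h2ne : ((2:ℝ)^ι) ≠ 0 := by positivity
    field_simp
    ring
  -- outer sum
  have houter := (hasSum_exp_quad y (4*A) (A*(4*(α+1)+6)+2*B)
    (A*((α+1)^2+2*(α+1))+B*(α+1))).mul_left ((2:ℝ)^(α+1))
  -- nonnegativity of g
  have hgnn : ∀ p : ℕ × ℕ, 0 ≤ g p := by
    rintro ⟨ι, m⟩
    rw [hg_def]
    simp only []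
    have h1 : (0:ℝ) ≤ y ^ ι / ι.factorial := by positivity
    have h2 : (0:ℝ) ≤ asc (α + ι + 1) m * (1/2:ℝ)^m :=
      mul_nonneg (asc_pos (hcpos ι) m).le (by positivity)
    have h3 : (0:ℝ) ≤ ((1:ℝ)/2)^ι := by positivity
    exact mul_nonneg (mul_nonneg (mul_nonneg h1 h2) h3) (hwnn _)
  have hsum : Summable g := by
    rw [summable_prod_of_nonneg hgnn]
    exact ⟨fun ι => (hrow ι).summable, by
      have : (fun ι : ℕ => ∑' m, g (ι, m)) = fun ι : ℕ =>
          (2:ℝ)^(α+1) * ((4*A * ((ι:ℝ)*((ι:ℝ)-1)) + (A*(4*(α+1)+6)+2*B) * (ι:ℝ)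
            + (A*((α+1)^2+2*(α+1))+B*(α+1))) * (y^ι / ι.factorial)) :=
        funext fun ι => (hrow ι).tsum_eq
      rw [this]
      exact houter.summable⟩
  have hsig : Summable fun (s : Σ n : ℕ, Finset.HasAntidiagonal.antidiagonal n) => g s.2 :=
    Finset.HasAntidiagonal.sigmaAntidiagonalEquivProd.summable_iff.mpr hsum
  -- termwise identification
  have hterm : ∀ κ : ℕ, (2:ℝ) ^ (-(κ:ℝ)) * lag κ α (-(η * x) / 2) * w κ
      = ∑ ι ∈ Finset.range (κ + 1), g (ι, κ - ι) := by
    intro κ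
    unfold lag
    rw [Finset.mul_sum, Finset.sum_mul]
    refine Finset.sum_congr rfl fun ι hι => ?_
    have hικ : ι ≤ κ := Nat.lt_succ_iff.mp (Finset.mem_range.mp hι)
    rw [hg_def]
    simp only []
    rw [Nat.add_sub_cancel' hικ]
    unfold asc
    have e1 : (2:ℝ) ^ (-(κ:ℝ)) = (1/2:ℝ)^κ := by
      rw [Real.rpow_neg (by norm_num), Real.rpow_natCast, one_div, inv_pow]
    have e2 : (-1:ℝ)^ι * (-(η*x)/2 : ℝ)^ι = y^ι := by
      rw [← mul_pow]
      congr 1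
      rw [hy_def]; ring
    have e3 : ((1:ℝ)/2)^(κ-ι) * (1/2:ℝ)^ι = (1/2:ℝ)^κ := by
      rw [← pow_add, Nat.sub_add_cancel hικ]
    rw [e1]
    linear_combination
      (((1/2:ℝ)^κ * ((∏ s ∈ Finset.range (κ-ι), (α+(ι:ℝ)+1+(s:ℝ))) / (κ-ι).factorial)
        * w κ / ι.factorial)) * e2
      + (-(y^ι / ι.factorial) * ((∏ s ∈ Finset.range (κ-ι), (α+(ι:ℝ)+1+(s:ℝ)))
        / (κ-ι).factorial) * w κ) * e3
  -- the if-term equals w κ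
  have hif : ∀ κ : ℕ, (if κ = 0 then ((0:ℝ) ^ 2) else ∫ z in Set.Ioi (0:ℝ), ker η β κ z * z ^ 2)
      = w κ := by
    intro κ
    rcases eq_or_ne κ 0 with h | h
    · subst h
      simp [hw_def]
    · rw [if_neg h, ker_integral hη hβ κ h, hw_def]
  -- assemble the tsum
  have htsum : (∑' κ : ℕ, (2:ℝ) ^ (-(κ:ℝ)) * lag κ α (-(η * x) / 2) *
      (if κ = 0 then ((0:ℝ) ^ 2) else ∫ z in Set.Ioi (0:ℝ), ker η β κ z * z ^ 2))
      = (2:ℝ)^(α+1) * ((4*A*y^2 + (A*(4*(α+1)+6)+2*B)*y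
          + (A*((α+1)^2+2*(α+1))+B*(α+1))) * Real.exp y) := by
    have c1 : ∀ κ : ℕ, (2:ℝ) ^ (-(κ:ℝ)) * lag κ α (-(η * x) / 2) *
        (if κ = 0 then ((0:ℝ) ^ 2) else ∫ z in Set.Ioi (0:ℝ), ker η β κ z * z ^ 2)
        = ∑ ι ∈ Finset.range (κ + 1), g (ι, κ - ι) := by
      intro κ
      rw [hif κ, hterm κ]
    rw [tsum_congr c1]
    have c2 : ∀ κ : ℕ, ∑ ι ∈ Finset.range (κ + 1), g (ι, κ - ι)
        = ∑ kl ∈ Finset.HasAntidiagonal.antidiagonal κ, g kl := by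
      intro κ
      rw [Finset.Nat.sum_antidiagonal_eq_sum_range_succ_mk]
    rw [tsum_congr c2]
    have c3 : (∑' κ : ℕ, ∑ kl ∈ Finset.HasAntidiagonal.antidiagonal κ, g kl)
        = ∑' (s : Σ n : ℕ, Finset.HasAntidiagonal.antidiagonal n), g s.2 := by
      rw [Summable.tsum_sigma' (fun n => (hasSum_fintype _).summable) hsig]
      exact tsum_congr fun n => ((tsum_fintype _).trans (Finset.sum_coe_sort _ _)).symm
    rw [c3]
    have c3b : (∑' (s : Σ n : ℕ, Finset.HasAntidiagonal.antidiagonal n), g s.2) = ∑' p : ℕ × ℕ, g p := by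
      exact Finset.HasAntidiagonal.sigmaAntidiagonalEquivProd.tsum_eq g
    rw [c3b, Summable.tsum_prod' hsum (fun ι => (hrow ι).summable)]
    have c4 : (fun ι : ℕ => ∑' m, g (ι, m)) = fun ι : ℕ =>
        (2:ℝ)^(α+1) * ((4*A * ((ι:ℝ)*((ι:ℝ)-1)) + (A*(4*(α+1)+6)+2*B) * (ι:ℝ)
          + (A*((α+1)^2+2*(α+1))+B*(α+1))) * (y^ι / ι.factorial)) :=
      funext fun ι => (hrow ι).tsum_eq
    rw [c4]
    exact houter.tsum_eq
  -- finish
  unfold Rop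
  simp only []
  rw [htsum]
  have hexp : Real.exp (-(η*x)/2) = (Real.exp y)⁻¹ := by
    rw [hy_def, ← Real.exp_neg]
    congr 1
    ring
  have h2p : (2:ℝ)^(-α-1) = ((2:ℝ)^(α+1))⁻¹ := by
    rw [show (-α-1 : ℝ) = -(α+1) by ring, Real.rpow_neg (by norm_num)]
  rw [hexp, h2p]
  have hEne : Real.exp y ≠ 0 := (Real.exp_pos y).ne'
  have h2ne : ((2:ℝ)^(α+1)) ≠ 0 := (Real.rpow_pos_of_pos two_pos _).ne'
  have hP : (Real.exp y)⁻¹ * ((2:ℝ)^(α+1))⁻¹ * ((2:ℝ)^(α+1) * ((4*A*y^2 + (A*(4*(α+1)+6)+2*B)*y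
      + (A*((α+1)^2+2*(α+1))+B*(α+1))) * Real.exp y))
      = 4*A*y^2 + (A*(4*(α+1)+6)+2*B)*y + (A*((α+1)^2+2*(α+1))+B*(α+1)) := by
    field_simp
  rw [hP, hy_def, hA_def, hB_def]
  field_simp
  ring
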